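/- Let Q be a finite quiver and a ≠ b two distinct arrows. Then Hom_{KQ}(C(a), C(b)) = 0, where C(a) = KQe_{t(a)}/KQa. -/

import Mathlib

open Quiver

universe w v u

/-- A representation of a quiver `V` over a field `K`: a vector space at each vertex
and a linear map for each arrow. -/
structure QRep (K : Type u) [Field K] (V : Type v) [Quiver.{v} V] where
  space : V → Type w
  [isAddCommGroup : ∀ i, AddCommGroup (space i)]
  [isModule : ∀ i, Module K (space i)]
  map : ∀ {i j : V}, (i ⟶ j) → (space i →ₗ[K] space j)

attribute [instance] QRep.isAddCommGroup QRep.isModule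

/-- A morphism of quiver representations. -/
structure QRepHom {K : Type u} [Field K] {V : Type v} [Quiver.{v} V]
    (X Y : QRep.{w} K V) where
  app : ∀ i, X.space i →ₗ[K] Y.space i
  comm : ∀ {i j : V} (a : i ⟶ j), (Y.map a).comp (app i) = (app j).comp (X.map a)

/-- The projective representation `KQe_i`: at vertex `j` it has basis the paths `i ⟶ j`,
and arrows act by postcomposition. -/
noncomputable def projRep (K : Type u) [Field K] (V : Type v) [Quiver.{v} V] (i : V) :
    QRep.{max u v} K V where
  space j := Path i j →₀ K
  map a := Finsupp.lmapDomain K K (fun p => p.cons a)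

/-- Right multiplication by an arrow `a : i ⟶ j`, as a morphism `KQe_j → KQe_i`. -/
noncomputable def rmulArrow {K : Type u} [Field K] {V : Type v} [Quiver.{v} V]
    {i j : V} (a : i ⟶ j) : QRepHom (projRep K V j) (projRep K V i) where
  app k := Finsupp.lmapDomain K K (fun p : Path j k => (a.toPath).comp p)
  comm := by
    intro k l b
    refine Finsupp.lhom_ext fun p c => ?_
    change Finsupp.mapDomain _ (Finsupp.mapDomain _ (Finsupp.single p c)) = Finsupp.mapDomain _ (Finsupp.mapDomain _ (Finsupp.single p c))
    simp [Finsupp.mapDomain_single, Quiver.Path.comp_cons]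

/-- The cokernel representation of a morphism of representations. -/
noncomputable def cokerRep {K : Type u} [Field K] {V : Type v} [Quiver.{v} V]
    {F X : QRep.{w} K V} (f : QRepHom F X) : QRep.{w} K V where
  space i := X.space i ⧸ LinearMap.range (f.app i)
  map {i j} a := Submodule.mapQ _ _ (X.map a) (by
    rintro x ⟨y, rfl⟩
    exact ⟨F.map a y, by
      rw [← LinearMap.comp_apply, ← f.comm, LinearMap.comp_apply]⟩)

/-- The projection onto the cokernel representation. -/
noncomputable def cokerProj {K : Type u} [Field K] {V : Type v} [Quiver.{v} V]
    {F X : QRep.{w} K V} (f : QRepHom F X) : QRepHom X (cokerRep f) where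
  app i := (LinearMap.range (f.app i)).mkQ
  comm {i j} a := Submodule.mapQ_mkQ _ _ (h := by
    rintro x ⟨y, rfl⟩
    exact ⟨F.map a y, by
      rw [← LinearMap.comp_apply, ← f.comm, LinearMap.comp_apply]⟩)

/-- The representation `C(a) = KQe_{t(a)}/KQa` for an arrow `a : i ⟶ j`. -/
noncomputable def Ca {K : Type u} [Field K] {V : Type v} [Quiver.{v} V]
    {i j : V} (a : i ⟶ j) : QRep.{max u v} K V :=
  cokerRep (rmulArrow (K := K) a)

/-- `Hom(A,B) = 0` in the category of representations. -/
def HomVanishes {K : Type u} [Field K] {V : Type v} [Quiver.{v} V]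
    (A B : QRep.{w} K V) : Prop :=
  ∀ θ : QRepHom A B, ∀ (k : V) (x : A.space k), θ.app k x = 0

/-- `u, v` form a short exact sequence `0 → X → E → Z → 0` of representations. -/
def IsSES {K : Type u} [Field K] {V : Type v} [Quiver.{v} V]
    {X E Z : QRep.{w} K V} (u : QRepHom X E) (v : QRepHom E Z) : Prop :=
  ∀ k : V, Function.Injective (u.app k) ∧ Function.Surjective (v.app k) ∧
    LinearMap.range (u.app k) = LinearMap.ker (v.app k)

/-- `Ext¹(Z,X) = 0`: every short exact sequence `0 → X → E → Z → 0` of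
representations splits. -/
def ExtVanishes {K : Type u} [Field K] {V : Type v} [Quiver.{v} V]
    (Z X : QRep.{w} K V) : Prop :=
  ∀ (E : QRep.{w} K V) (u : QRepHom X E) (v : QRepHom E Z), IsSES u v →
    ∃ s : QRepHom Z E, ∀ k : V, (v.app k).comp (s.app k) = LinearMap.id


section Aux

variable {K : Type u} [Field K] {V : Type v} [Quiver.{v} V]

/-- Combinatorial key: if `p.cons a` starts with `b` and `a ≠ b`, then `p` starts with `b`. -/
lemma aux_cons_comp {i₁ j₁ i₂ j₂ : V} (a : i₁ ⟶ j₁) (b : i₂ ⟶ j₂)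
    (hab : (⟨i₁, j₁, a⟩ : Σ i j : V, i ⟶ j) ≠ ⟨i₂, j₂, b⟩)
    (p : Path i₂ i₁) (q : Path j₂ j₁) (h : p.cons a = b.toPath.comp q) :
    ∃ q' : Path j₂ i₁, p = b.toPath.comp q' := by
  cases q with
  | nil =>
    exfalso
    simp only [Quiver.Path.comp_nil, Hom.toPath] at h
    have h1 : i₁ = i₂ := Quiver.Path.obj_eq_of_cons_eq_cons h
    have h2 : HEq a b := Quiver.Path.hom_heq_of_cons_eq_cons h
    apply hab
    subst h1
    rw [eq_of_heq h2]
  | cons q₀ c =>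
    rw [Quiver.Path.comp_cons] at h
    have h1 := Quiver.Path.obj_eq_of_cons_eq_cons h
    subst h1
    exact ⟨q₀, eq_of_heq (Quiver.Path.heq_of_cons_eq_cons h)⟩

lemma aux_cons_inj {i j k : V} (a : i ⟶ j) :
    Function.Injective (fun p : Path k i => p.cons a) := by
  intro p q h
  exact eq_of_heq (Quiver.Path.heq_of_cons_eq_cons h)

lemma aux_range_rmul {i₂ j₂ : V} (b : i₂ ⟶ j₂) (k : V) :
    LinearMap.range ((rmulArrow (K := K) b).app k) =
      Finsupp.supported K K (Set.range fun q : Path j₂ k => b.toPath.comp q) := by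
  erw [LinearMap.range_eq_map, ← Finsupp.supported_univ]
  show Submodule.map (Finsupp.lmapDomain K K _) _ = _
  rw [Finsupp.lmapDomain_supported, Set.image_univ]

end Aux


lemma Ca_map_mk {K : Type u} [Field K] {V : Type v} [Quiver.{v} V]
    {i₂ j₂ : V} (b : i₂ ⟶ j₂) {k l : V} (c : k ⟶ l) (y : Path i₂ k →₀ K) :
    (Ca (K := K) b).map c (Submodule.Quotient.mk y) =
      Submodule.Quotient.mk (Finsupp.mapDomain (fun p => p.cons c) y) := rfl

lemma aux_inj {K : Type u} [Field K] {V : Type v} [Quiver.{v} V]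
    {i₁ j₁ i₂ j₂ : V} (a : i₁ ⟶ j₁) (b : i₂ ⟶ j₂)
    (hab : (⟨i₁, j₁, a⟩ : Σ i j : V, i ⟶ j) ≠ ⟨i₂, j₂, b⟩) :
    Function.Injective ((Ca (K := K) b).map a) := by
  rw [← LinearMap.ker_eq_bot, LinearMap.ker_eq_bot']
  intro x hx
  obtain ⟨y, rfl⟩ := Submodule.Quotient.mk_surjective _ x
  erw [Ca_map_mk, Submodule.Quotient.mk_eq_zero] at hx
  erw [Submodule.Quotient.mk_eq_zero]
  rw [show LinearMap.range ((rmulArrow (K := K) b).app j₁) = _ from aux_range_rmul b j₁] at hx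
  rw [show LinearMap.range ((rmulArrow (K := K) b).app i₁) = _ from aux_range_rmul b i₁]
  erw [Finsupp.mem_supported] at hx ⊢
  intro p hp
  have h1 : (p.cons a) ∈ (Finsupp.mapDomain (fun p : Path i₂ i₁ => p.cons a) y).support := by
    erw [Finsupp.mem_support_iff, Finsupp.mapDomain_apply (aux_cons_inj a)]
    exact Finsupp.mem_support_iff.mp hp
  obtain ⟨q, hq⟩ := hx h1
  obtain ⟨q', hq'⟩ := aux_cons_comp a b hab p q hq.symm
  exact ⟨q', hq'.symm⟩

/-- For distinct arrows `a ≠ b` of a finite quiver, `Hom(C(a), C(b)) = 0`. -/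
theorem hom_Ca_Cb_eq_zero {K : Type u} [Field K] {V : Type v} [Quiver.{v} V]
    [Fintype V] [∀ i j : V, Fintype (i ⟶ j)]
    {i₁ j₁ i₂ j₂ : V} (a : i₁ ⟶ j₁) (b : i₂ ⟶ j₂)
    (hab : (⟨i₁, j₁, a⟩ : Σ i j : V, i ⟶ j) ≠ ⟨i₂, j₂, b⟩) :
    HomVanishes (Ca (K := K) a) (Ca (K := K) b) := by
  intro θ k x
  have hsingle : ∀ (l : V) (p : Path i₁ l),
      θ.app l (Submodule.Quotient.mk (Finsupp.single p 1)) = 0 := by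
    have hbase : θ.app i₁
        (Submodule.Quotient.mk (Finsupp.single (Path.nil : Path i₁ i₁) (1 : K))) = 0 := by
      set e : (Ca (K := K) a).space i₁ :=
        Submodule.Quotient.mk (Finsupp.single (Path.nil : Path i₁ i₁) (1 : K)) with he
      have h1 : (Ca (K := K) a).map a e = 0 := by
        erw [he, Ca_map_mk, Finsupp.mapDomain_single, Submodule.Quotient.mk_eq_zero]
        exact ⟨Finsupp.single Path.nil 1, by
          show Finsupp.mapDomain _ _ = _
          rw [Finsupp.mapDomain_single]; rfl⟩
      have h2 : (Ca (K := K) b).map a (θ.app i₁ e) = 0 := by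
        rw [← LinearMap.comp_apply, θ.comm, LinearMap.comp_apply, h1, map_zero]
      exact aux_inj a b hab (h2.trans (map_zero _).symm)
    intro l p
    induction p with
    | nil => exact hbase
    | cons p c ih =>
      have hstep : (Submodule.Quotient.mk (Finsupp.single (p.cons c) (1 : K))
            : (Ca (K := K) a).space _) =
          (Ca (K := K) a).map c (Submodule.Quotient.mk (Finsupp.single p 1)) := by
        rw [Ca_map_mk, Finsupp.mapDomain_single]
        rfl
      erw [hstep, ← LinearMap.comp_apply, ← θ.comm, LinearMap.comp_apply, ih, map_zero]
  obtain ⟨y, rfl⟩ := Submodule.Quotient.mk_surjective _ x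
  let L : (Path i₁ k →₀ K) →ₗ[K] (Ca (K := K) b).space k :=
    (θ.app k).comp (Submodule.mkQ _)
  have hL : L = 0 := by
    refine Finsupp.lhom_ext fun p c => ?_
    have h1 : Finsupp.single p c = c • Finsupp.single p (1 : K) := by
      rw [Finsupp.smul_single, smul_eq_mul, mul_one]
    rw [h1, map_smul, LinearMap.zero_apply,
      show L (Finsupp.single p 1) = θ.app k (Submodule.Quotient.mk (Finsupp.single p 1)) from rfl,
      hsingle, smul_zero]
  have : L y = 0 := by rw [hL]; rfl
  exact this
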